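/- Let N and L be positive integers. Let x ∈ ℝ^N with x_k ∈ {−1,1} for all k and y ∈ ℝ^N with −1 ≤ y_k ≤ 1 for all k. If x and y have the same FROG trace, i.e. |∑_{k=0}^{N−1} x_k x_{(k+mL) mod N} e^{−2πikn/N}|² = |∑_{k=0}^{N−1} y_k y_{(k+mL) mod N} e^{−2πikn/N}|² for all n = 0,…,N−1 and m = 0,…,⌈N/L⌉−1, then y_k ∈ {−1,1} for all k. -/

import Mathlib

open scoped BigOperators
open Finset

/-- Discrete Fourier transform of `x ∈ ℂ^N`. -/
noncomputable def dft {N : ℕ} (x : Fin N → ℂ) (n : Fin N) : ℂ :=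
  ∑ k : Fin N, x k * Complex.exp (-2 * Real.pi * Complex.I * ((k : ℕ) : ℂ) * ((n : ℕ) : ℂ) / (N : ℂ))

/-- Inverse discrete Fourier transform. -/
noncomputable def idft {N : ℕ} (u : Fin N → ℂ) (j : Fin N) : ℂ :=
  (1 / (N : ℂ)) * ∑ n : Fin N, u n * Complex.exp (2 * Real.pi * Complex.I * ((j : ℕ) : ℂ) * ((n : ℕ) : ℂ) / (N : ℂ))

/-- `M`-point oversampled discrete Fourier transform of `x ∈ ℂ^N`. -/
noncomputable def odft {N : ℕ} (M : ℕ) (x : Fin N → ℂ) (n : Fin M) : ℂ :=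
  ∑ k : Fin N, x k * Complex.exp (-2 * Real.pi * Complex.I * ((k : ℕ) : ℂ) * ((n : ℕ) : ℂ) / (M : ℂ))

/-- Periodic autocorrelation of `x ∈ ℂ^N`. -/
noncomputable def autp {N : ℕ} (x : Fin N → ℂ) (j : Fin N) : ℂ :=
  ∑ k : Fin N, x (k + j) * (starRingEnd ℂ) (x k)

/-- Extension of `x ∈ ℂ^N` to `ℤ` by zero. -/
noncomputable def extz {N : ℕ} (x : Fin N → ℂ) (i : ℤ) : ℂ :=
  if h : 0 ≤ i ∧ i < (N : ℤ) then x ⟨i.toNat, by omega⟩ else 0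

/-- (Regular) autocorrelation of `x ∈ ℂ^N`, as a function on `ℤ`. -/
noncomputable def aut {N : ℕ} (x : Fin N → ℂ) (j : ℤ) : ℂ :=
  ∑ k : Fin N, extz x (((k : ℕ) : ℤ) + j) * (starRingEnd ℂ) (extz x ((k : ℕ) : ℤ))

/-- Circular convolution on `ℂ^N`. -/
noncomputable def cconv {N : ℕ} (v x : Fin N → ℂ) (j : Fin N) : ℂ :=
  ∑ k : Fin N, v k * x (j - k)

/-- The ℓ² norm on `ℂ^N`. -/
noncomputable def l2 {N : ℕ} (x : Fin N → ℂ) : ℝ :=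
  Real.sqrt (∑ k : Fin N, ‖x k‖ ^ 2)

/-- The circular finite-difference operator. -/
noncomputable def nabla {N : ℕ} [NeZero N] (x : Fin N → ℂ) (k : Fin N) : ℂ :=
  x (k + 1) - x k

/-- The sup norm on `ℂ^N`. -/
noncomputable def linf {N : ℕ} [NeZero N] (x : Fin N → ℂ) : ℝ :=
  Finset.univ.sup' Finset.univ_nonempty (fun k => ‖x k‖)

/-- The sup norm on `ℝ^N`. -/
noncomputable def linfR {N : ℕ} [NeZero N] (x : Fin N → ℝ) : ℝ :=
  Finset.univ.sup' Finset.univ_nonempty (fun k => |x k|)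

/-- Cyclic index shift: `k ↦ (k + s) mod N`. -/
def shiftIdx {N : ℕ} [NeZero N] (k : Fin N) (s : ℕ) : Fin N :=
  ⟨((k : ℕ) + s) % N, Nat.mod_lt _ (Nat.pos_of_ne_zero (NeZero.ne N))⟩

/-- A window of length `W` with constant value `a`, extended by zero. -/
noncomputable def win (W : ℕ) (a : ℂ) (i : ℤ) : ℂ :=
  if 0 ≤ i ∧ i < (W : ℤ) then a else 0

lemma orth {N : ℕ} (hN : 0 < N) (d : ℤ) :
    ∑ n : Fin N, Complex.exp (2 * Real.pi * Complex.I * (d : ℂ) * ((n : ℕ) : ℂ) / (N : ℂ)) =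
      if (N : ℤ) ∣ d then (N : ℂ) else 0 := by
  have hNC : (N : ℂ) ≠ 0 := Nat.cast_ne_zero.mpr hN.ne'
  by_cases hdvd : (N : ℤ) ∣ d
  · obtain ⟨m, rfl⟩ := hdvd
    rw [if_pos ⟨m, rfl⟩]
    have : ∀ n : Fin N, Complex.exp (2 * Real.pi * Complex.I * ((((N:ℤ) * m : ℤ)) : ℂ) * ((n : ℕ) : ℂ) / (N : ℂ)) = 1 := by
      intro n
      have : (2 * (Real.pi:ℂ) * Complex.I * (((N:ℤ) * m : ℤ) : ℂ) * ((n : ℕ) : ℂ) / (N : ℂ))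
          = ((m * n : ℤ) : ℂ) * (2 * Real.pi * Complex.I) := by
        push_cast
        field_simp
      rw [this, Complex.exp_int_mul_two_pi_mul_I]
    simp only [this, Finset.sum_const, Finset.card_univ, Fintype.card_fin, nsmul_eq_mul, mul_one]
  · rw [if_neg hdvd]
    set ζ : ℂ := Complex.exp (2 * Real.pi * Complex.I * (d : ℂ) / (N : ℂ)) with hζ
    have hterm : ∀ n : Fin N, Complex.exp (2 * Real.pi * Complex.I * (d : ℂ) * ((n : ℕ) : ℂ) / (N : ℂ)) = ζ ^ (n : ℕ) := by
      intro n
      rw [hζ, ← Complex.exp_nat_mul]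
      ring_nf
    have hζN : ζ ^ N = 1 := by
      rw [hζ, ← Complex.exp_nat_mul]
      have : (N : ℂ) * (2 * Real.pi * Complex.I * (d : ℂ) / (N : ℂ)) = (d : ℂ) * (2 * Real.pi * Complex.I) := by
        field_simp
      rw [this, Complex.exp_int_mul_two_pi_mul_I]
    have hζ1 : ζ ≠ 1 := by
      intro h1
      rw [hζ, Complex.exp_eq_one_iff] at h1
      obtain ⟨m, hm⟩ := h1
      apply hdvd
      
      have h2 : (d : ℂ) = (m : ℂ) * N := by
        have hpi : (2 * (Real.pi:ℂ) * Complex.I) ≠ 0 := by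
          simp [Real.pi_ne_zero, Complex.I_ne_zero]
        field_simp at hm
        have := hm
        -- hm : 2 * π * I * d = m * (2 * π * I) * N
        have : (d:ℂ) * (2 * (Real.pi:ℂ) * Complex.I) = ((m:ℂ) * N) * (2 * (Real.pi:ℂ) * Complex.I) := by
          linear_combination (2 * (Real.pi:ℂ) * Complex.I) * this
        exact mul_right_cancel₀ hpi this
      have h3 : d = m * (N:ℤ) := by exact_mod_cast h2
      exact ⟨m, by rw [h3, mul_comm]⟩
    simp only [hterm]
    rw [Fin.sum_univ_eq_sum_range (fun n => ζ ^ n), geom_sum_eq hζ1, hζN]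
    simp

set_option maxHeartbeats 1000000 in
lemma parseval {N : ℕ} (hN : 0 < N) (z : Fin N → ℝ) :
    ∑ n : Fin N, (‖∑ k : Fin N, ((z k : ℝ) : ℂ) *
      Complex.exp (-2 * Real.pi * Complex.I * ((k : ℕ) : ℂ) * ((n : ℕ) : ℂ) / (N : ℂ))‖) ^ 2
      = (N : ℝ) * ∑ k : Fin N, (z k) ^ 2 := by
  have hNC : (N : ℂ) ≠ 0 := Nat.cast_ne_zero.mpr hN.ne'
  set E : Fin N → Fin N → ℂ := fun k n =>
    Complex.exp (-2 * Real.pi * Complex.I * ((k : ℕ) : ℂ) * ((n : ℕ) : ℂ) / (N : ℂ)) with hE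
  set Ep : Fin N → Fin N → ℂ := fun j n =>
    Complex.exp (2 * Real.pi * Complex.I * ((j : ℕ) : ℂ) * ((n : ℕ) : ℂ) / (N : ℂ)) with hEp
  set F : Fin N → ℂ := fun n => ∑ k : Fin N, ((z k : ℝ) : ℂ) * E k n with hF
  have hconj : ∀ n, (starRingEnd ℂ) (F n) = ∑ j : Fin N, ((z j : ℝ) : ℂ) * Ep j n := by
    intro n
    rw [hF, map_sum]
    refine Finset.sum_congr rfl fun j _ => ?_
    rw [map_mul, Complex.conj_ofReal]
    congr 1
    rw [hE, ← Complex.exp_conj]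
    congr 1
    simp only [map_div₀, map_mul, Complex.conj_I, map_neg, map_ofNat,
      Complex.conj_ofReal, Complex.conj_natCast]
    ring
  have key : ∑ n : Fin N, F n * (starRingEnd ℂ) (F n) = (N : ℂ) * ∑ k : Fin N, ((z k : ℝ) : ℂ) ^ 2 := by
    calc ∑ n : Fin N, F n * (starRingEnd ℂ) (F n)
        = ∑ n : Fin N, ∑ k : Fin N, ∑ j : Fin N,
            ((z k : ℝ) : ℂ) * ((z j : ℝ) : ℂ) * (E k n * Ep j n) := by
          refine Finset.sum_congr rfl fun n _ => ?_
          rw [hconj n, hF, Finset.sum_mul]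
          refine Finset.sum_congr rfl fun k _ => ?_
          rw [Finset.mul_sum]
          exact Finset.sum_congr rfl fun j _ => by ring
      _ = ∑ k : Fin N, ∑ j : Fin N, ((z k : ℝ) : ℂ) * ((z j : ℝ) : ℂ) * ∑ n : Fin N, (E k n * Ep j n) := by
          rw [Finset.sum_comm]
          refine Finset.sum_congr rfl fun k _ => ?_
          rw [Finset.sum_comm]
          exact Finset.sum_congr rfl fun j _ => by rw [Finset.mul_sum]
      _ = ∑ k : Fin N, ∑ j : Fin N, ((z k : ℝ) : ℂ) * ((z j : ℝ) : ℂ) *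
            (if (N : ℤ) ∣ ((j : ℤ) - (k : ℤ)) then (N : ℂ) else 0) := by
          refine Finset.sum_congr rfl fun k _ => Finset.sum_congr rfl fun j _ => ?_
          congr 1
          rw [← orth hN ((j : ℤ) - (k : ℤ))]
          refine Finset.sum_congr rfl fun n _ => ?_
          rw [hE, hEp, ← Complex.exp_add]
          congr 1
          push_cast
          ring
      _ = ∑ k : Fin N, ((z k : ℝ) : ℂ) * ((z k : ℝ) : ℂ) * (N : ℂ) := by
          refine Finset.sum_congr rfl fun k _ => ?_
          rw [Finset.sum_eq_single k]
          · simp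
          · intro j _ hjk
            rw [if_neg, mul_zero]
            intro hdvd
            have hj := j.isLt
            have hk := k.isLt
            have h0 : ((j : ℤ) - (k : ℤ)) = 0 := by
              refine Int.eq_zero_of_abs_lt_dvd hdvd ?_
              rw [abs_lt]
              omega
            exact hjk (Fin.ext (by omega))
          · intro hk
            exact absurd (Finset.mem_univ k) hk
      _ = (N : ℂ) * ∑ k : Fin N, ((z k : ℝ) : ℂ) ^ 2 := by
          rw [Finset.mul_sum]
          exact Finset.sum_congr rfl fun k _ => by ring
  have hL : ((∑ n : Fin N, (‖F n‖) ^ 2 : ℝ) : ℂ) = ∑ n : Fin N, F n * (starRingEnd ℂ) (F n) := by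
    push_cast
    refine Finset.sum_congr rfl fun n _ => ?_
    rw [Complex.mul_conj, ← Complex.sq_norm]
    push_cast
    ring
  have hR : (((N : ℝ) * ∑ k : Fin N, (z k) ^ 2 : ℝ) : ℂ) = (N : ℂ) * ∑ k : Fin N, ((z k : ℝ) : ℂ) ^ 2 := by
    push_cast
    ring
  have hfin := hL.trans (key.trans hR.symm)
  have h2 : ∑ n : Fin N, (‖F n‖) ^ 2 = (N : ℝ) * ∑ k : Fin N, (z k) ^ 2 := by
    exact_mod_cast hfin
  exact h2


lemma shiftIdx_zero {N : ℕ} [NeZero N] (k : Fin N) : shiftIdx k 0 = k := by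
  ext
  simp [shiftIdx, Nat.mod_eq_of_lt k.isLt]

/-- box relaxation for `{-1,1}`-valued signals under the FROG
trace. -/
theorem box_to_pm_one_frog {N L : ℕ} [NeZero N] (hL : 0 < L) (x y : Fin N → ℝ)
    (hx : ∀ k, x k = -1 ∨ x k = 1) (hy : ∀ k, -1 ≤ y k ∧ y k ≤ 1)
    (h : ∀ m : ℕ, m < (N + L - 1) / L → ∀ n : Fin N,
      (‖∑ k : Fin N, ((x k * x (shiftIdx k (m * L)) : ℝ) : ℂ) *
        Complex.exp (-2 * Real.pi * Complex.I * ((k : ℕ) : ℂ) * ((n : ℕ) : ℂ) / (N : ℂ))‖) ^ 2 =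
      (‖∑ k : Fin N, ((y k * y (shiftIdx k (m * L)) : ℝ) : ℂ) *
        Complex.exp (-2 * Real.pi * Complex.I * ((k : ℕ) : ℂ) * ((n : ℕ) : ℂ) / (N : ℂ))‖) ^ 2) :
    ∀ k, y k = -1 ∨ y k = 1 := by
  have hN : 0 < N := Nat.pos_of_ne_zero (NeZero.ne N)
  have h0 : 0 < (N + L - 1) / L := Nat.div_pos (by omega) hL
  have hP1 := parseval hN (fun k : Fin N => x k * x (shiftIdx k (0 * L)))
  have hP2 := parseval hN (fun k : Fin N => y k * y (shiftIdx k (0 * L)))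
  have hsum : (N : ℝ) * ∑ k : Fin N, (x k * x (shiftIdx k (0 * L))) ^ 2
      = (N : ℝ) * ∑ k : Fin N, (y k * y (shiftIdx k (0 * L))) ^ 2 := by
    rw [← hP1, ← hP2]
    exact Finset.sum_congr rfl fun n _ => h 0 h0 n
  have hNne : (N : ℝ) ≠ 0 := Nat.cast_ne_zero.mpr hN.ne'
  have hkey := mul_left_cancel₀ hNne hsum
  simp only [Nat.zero_mul, shiftIdx_zero] at hkey
  have hxval : ∀ k : Fin N, (x k * x k) ^ 2 = 1 := by
    intro k
    rcases hx k with hv | hv <;> rw [hv] <;> norm_num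
  rw [Finset.sum_congr rfl (fun k _ => hxval k)] at hkey
  simp only [Finset.sum_const, Finset.card_univ, Fintype.card_fin, nsmul_eq_mul, mul_one] at hkey
  have hle : ∀ k : Fin N, (y k * y k) ^ 2 ≤ 1 := by
    intro k
    obtain ⟨h1, h2⟩ := hy k
    have hyy : y k * y k ≤ 1 := by nlinarith
    nlinarith [mul_self_nonneg (y k)]
  have hzero : ∑ k : Fin N, (1 - (y k * y k) ^ 2) = 0 := by
    rw [Finset.sum_sub_distrib, ← hkey]
    simp
  have heach := (Finset.sum_eq_zero_iff_of_nonneg (fun k _ => by linarith [hle k])).mp hzero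
  intro k
  have h1 : (y k * y k) ^ 2 = 1 := by
    have := heach k (Finset.mem_univ k)
    linarith
  have h2 : y k * y k = 1 := by
    have hnn : 0 ≤ y k * y k := mul_self_nonneg _
    nlinarith
  exact (mul_self_eq_one_iff.mp h2).symm
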